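/- Let G be a group and B a commutative unital algebra with a G-module structure S : G → Aut(B). Two crossed product algebras A_ω and A_{ω'} (built from 2-cocycles ω, ω' ∈ Z²(G, B^×) for the module structure S) are equivalent as (G,B)-crossed product algebras if and only if ω'·ω^{-1} is a coboundary in B²(G, B^×); consequently the map [ω] ↦ [A_ω] from H²(G, B^×)_S to equivalence classes of (G,B)-crossed products with G-module structure S is a bijection. -/

import Mathlib

/-- Crossed-product multiplication on `⊕_{g ∈ G} B v_g`, modelled on `G →₀ B`:
`(b v_g)(b' v_{g'}) = b·S(g)(b')·ω(g,g') v_{gg'}`. -/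
noncomputable def cpMul {G : Type*} [Group G] {B : Type*} [CommRing B]
    (S : G →* (B ≃+* B)) (ω : G → G → Bˣ) :
    (G →₀ B) → (G →₀ B) → (G →₀ B) := fun f₁ f₂ =>
  f₁.sum fun g b => f₂.sum fun g' b' =>
    Finsupp.single (g * g') (b * S g b' * (ω g g' : B))

variable {G : Type*} [Group G] {B : Type*} [CommRing B] (S : G →* (B ≃+* B))

set_option linter.unusedSectionVars false

/-- Normalized 2-cocycles `ω ∈ Z²(G, Bˣ)` for the `G`-module structure `S`. -/
def IsCocycle (ω : G → G → Bˣ) : Prop :=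
  (∀ g, ω g 1 = 1 ∧ ω 1 g = 1) ∧
  ∀ g g' g'', (S g (ω g' g'') : B) * (ω g (g' * g'') : B) =
    (ω g g' : B) * (ω (g * g') g'' : B)

/-- `ω` and `ω'` are cohomologous: `ω'·ω⁻¹` is the coboundary of some normalized
`h ∈ C¹(G, Bˣ)`, i.e. `ω'(g,g') = h(g)·S(g)(h(g'))·h(gg')⁻¹·ω(g,g')`. -/
def Cohomologous (ω ω' : G → G → Bˣ) : Prop :=
  ∃ h : G → Bˣ, h 1 = 1 ∧ ∀ g g',
    (ω' g g' : B) = (h g : B) * S g (h g') * ((h (g * g'))⁻¹ : Bˣ) * (ω g g' : B)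

/-- The crossed product algebras `A_ω` and `A_{ω'}` are equivalent: there is a
grading-preserving multiplicative additive bijection fixing `B` pointwise. -/
def AlgEquivalent (ω ω' : G → G → Bˣ) : Prop :=
  ∃ φ : (G →₀ B) → (G →₀ B),
    Function.Bijective φ ∧
    (∀ x y : G →₀ B, φ (x + y) = φ x + φ y) ∧
    (∀ x y : G →₀ B, φ (cpMul S ω' x y) = cpMul S ω (φ x) (φ y)) ∧
    (∀ b : B, φ (Finsupp.single 1 b) = Finsupp.single 1 b) ∧
    (∀ (g : G) (b : B), ∃ b' : B, φ (Finsupp.single g b) = Finsupp.single g b')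

/-! ### Auxiliary lemmas -/

/-- The "rescaling" map `b v_g ↦ b·u(g) v_g`. -/
noncomputable def mapScale {G : Type*} {B : Type*} [CommRing B]
    (u : G → B) (f : G →₀ B) : G →₀ B :=
  f.sum fun g b => Finsupp.single g (b * u g)

lemma mapScale_single (u : G → B) (g : G) (b : B) :
    mapScale u (Finsupp.single g b) = Finsupp.single g (b * u g) :=
  Finsupp.sum_single_index (by simp)

lemma mapScale_add (u : G → B) (x y : G →₀ B) :
    mapScale u (x + y) = mapScale u x + mapScale u y :=
  Finsupp.sum_add_index' (by simp) (by intros; simp [add_mul, Finsupp.single_add])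

lemma mapScale_zero (u : G → B) : mapScale u (0 : G →₀ B) = 0 :=
  Finsupp.sum_zero_index

lemma mapScale_comp (u v : G → B) (f : G →₀ B) :
    mapScale v (mapScale u f) = mapScale (fun g => u g * v g) f := by
  induction f using Finsupp.induction with
  | zero => simp [mapScale_zero]
  | single_add a b f _ _ ih =>
    simp only [mapScale_add, mapScale_single, ih, mul_assoc]

lemma mapScale_one (f : G →₀ B) : mapScale (fun _ => (1 : B)) f = f := by
  simp only [mapScale, mul_one]
  exact Finsupp.sum_single f

lemma mapScale_apply (u : G → B) (f : G →₀ B) (g : G) :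
    mapScale u f g = f g * u g := by
  induction f using Finsupp.induction with
  | zero => simp [mapScale_zero]
  | single_add a b f _ _ ih =>
    rw [mapScale_add, Finsupp.add_apply, Finsupp.add_apply, mapScale_single, ih, add_mul]
    rcases eq_or_ne a g with rfl | h
    · simp
    · simp [Finsupp.single_apply, h]

lemma cpMul_single (ω : G → G → Bˣ) (g g' : G) (b b' : B) :
    cpMul S ω (Finsupp.single g b) (Finsupp.single g' b') =
      Finsupp.single (g * g') (b * S g b' * (ω g g' : B)) := by
  unfold cpMul
  rw [Finsupp.sum_single_index (by simp), Finsupp.sum_single_index (by simp)]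

lemma cpMul_zero_left (ω : G → G → Bˣ) (y : G →₀ B) : cpMul S ω 0 y = 0 :=
  Finsupp.sum_zero_index

lemma cpMul_zero_right (ω : G → G → Bˣ) (x : G →₀ B) : cpMul S ω x 0 = 0 := by
  unfold cpMul
  simp

lemma cpMul_add_left (ω : G → G → Bˣ) (x y z : G →₀ B) :
    cpMul S ω (x + y) z = cpMul S ω x z + cpMul S ω y z := by
  unfold cpMul
  exact Finsupp.sum_add_index' (by simp)
    (by intros; simp [add_mul, Finsupp.single_add, Finsupp.sum_add])

lemma cpMul_add_right (ω : G → G → Bˣ) (x y z : G →₀ B) :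
    cpMul S ω x (y + z) = cpMul S ω x y + cpMul S ω x z := by
  unfold cpMul
  rw [← Finsupp.sum_add]
  refine Finsupp.sum_congr fun g _ => ?_
  exact Finsupp.sum_add_index' (by simp)
    (by intros; simp [mul_add, add_mul, Finsupp.single_add])

/-- Cohomologous cocycles give equivalent crossed products. -/
lemma cohomologous_to_equiv {ω ω' : G → G → Bˣ} (hc : Cohomologous S ω ω') :
    AlgEquivalent S ω ω' := by
  obtain ⟨h, h1, hcoh⟩ := hc
  refine ⟨mapScale (fun g => (h g : B)), ?_, mapScale_add _, ?_, ?_, ?_⟩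
  · refine Function.bijective_iff_has_inverse.mpr
      ⟨mapScale (fun g => ((h g)⁻¹ : Bˣ)), fun f => ?_, fun f => ?_⟩
    · rw [mapScale_comp]
      simpa using mapScale_one f
    · rw [mapScale_comp]
      simpa using mapScale_one f
  · -- multiplicativity
    have key : ∀ (g g' : G) (b b' : B),
        mapScale (fun g => (h g : B)) (cpMul S ω' (Finsupp.single g b) (Finsupp.single g' b')) =
        cpMul S ω (mapScale (fun g => (h g : B)) (Finsupp.single g b))
          (mapScale (fun g => (h g : B)) (Finsupp.single g' b')) := by
      intro g g' b b'
      rw [cpMul_single, mapScale_single, mapScale_single, mapScale_single, cpMul_single]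
      congr 1
      have hu : ((h (g * g'))⁻¹ : Bˣ) * ((h (g * g')) : B) = 1 := Units.inv_mul _
      rw [hcoh g g', map_mul]
      ring_nf
      linear_combination (b * S g b' * (h g : B) * (S g (h g') : B) * (ω g g' : B)) * hu
    have keyl : ∀ (g : G) (b : B) (y : G →₀ B),
        mapScale (fun g => (h g : B)) (cpMul S ω' (Finsupp.single g b) y) =
        cpMul S ω (mapScale (fun g => (h g : B)) (Finsupp.single g b))
          (mapScale (fun g => (h g : B)) y) := by
      intro g b y
      induction y using Finsupp.induction with
      | zero => rw [cpMul_zero_right, mapScale_zero, cpMul_zero_right]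
      | single_add a c f _ _ ih =>
        rw [cpMul_add_right, mapScale_add, mapScale_add, cpMul_add_right, ih, key]
    intro x y
    induction x using Finsupp.induction with
    | zero => rw [cpMul_zero_left, mapScale_zero, cpMul_zero_left]
    | single_add a c f _ _ ih =>
      rw [cpMul_add_left, mapScale_add, mapScale_add, cpMul_add_left, ih, keyl]
  · intro b
    rw [mapScale_single, h1]
    simp
  · intro g b
    exact ⟨b * (h g : B), mapScale_single _ _ _⟩

/-- Equivalent crossed products (of cocycles) have cohomologous cocycles. -/
lemma equiv_to_cohomologous {ω ω' : G → G → Bˣ} (hω : IsCocycle S ω) (hω' : IsCocycle S ω')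
    (he : AlgEquivalent S ω ω') : Cohomologous S ω ω' := by
  classical
  obtain ⟨φ, hbij, hadd, hmul, hB, hgr⟩ := he
  -- the "component" function
  set τ : G → B → B := fun g b => φ (Finsupp.single g b) g with hτ
  have hφsingle : ∀ g b, φ (Finsupp.single g b) = Finsupp.single g (τ g b) := by
    intro g b
    obtain ⟨b', hb'⟩ := hgr g b
    rw [hb']
    simp [hτ, hb']
  have hτ1 : ∀ b, τ 1 b = b := by
    intro b
    simp [hτ, hB b]
  -- multiplicative relation on components
  have hτmul : ∀ (g g' : G) (b b' : B),
      τ (g * g') (b * S g b' * (ω' g g' : B)) = τ g b * S g (τ g' b') * (ω g g' : B) := by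
    intro g g' b b'
    have := hmul (Finsupp.single g b) (Finsupp.single g' b')
    rw [cpMul_single, hφsingle, hφsingle, hφsingle, cpMul_single] at this
    have := congrArg (fun f : G →₀ B => f (g * g')) this
    simpa using this
  set k : G → B := fun g => τ g 1 with hk
  -- τ g is just multiplication by k g
  have hτk : ∀ g c, τ g c = c * k g := by
    intro g c
    have h1 : τ g (S g ((S g).symm c)) = τ g 1 * S g ((S g).symm c) := by
      have := hτmul g 1 1 ((S g).symm c)
      simpa [hτ1, (hω.1 g).1, (hω'.1 g).1] using this
    rw [(S g).apply_symm_apply] at h1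
    rw [h1, mul_comm, hk]
  have hφf : ∀ f, φ f = mapScale k f := by
    have hφ0 : φ 0 = 0 := by
      have := hadd 0 0
      simpa using this.symm
    intro f
    induction f using Finsupp.induction with
    | zero => rw [hφ0, mapScale_zero]
    | single_add a b f _ _ ih =>
      rw [hadd, mapScale_add, ih, hφsingle, mapScale_single, hτk]
  -- k g is a unit
  have hku : ∀ g, ∃ c, c * k g = 1 := by
    intro g
    obtain ⟨f, hf⟩ := hbij.2 (Finsupp.single g 1)
    refine ⟨f g, ?_⟩
    have := congrArg (fun x : G →₀ B => x g) hf
    rw [hφf, ] at this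
    simpa [mapScale_apply] using this
  choose c hc using hku
  set h : G → Bˣ := fun g => ⟨k g, c g, by rw [mul_comm]; exact hc g, hc g⟩ with hh
  refine ⟨h, ?_, ?_⟩
  · ext
    show k 1 = 1
    rw [hk]
    exact hτ1 1
  · intro g g'
    have key : (ω' g g' : B) * k (g * g') = k g * S g (k g') * (ω g g' : B) := by
      have := hτmul g g' 1 1
      rw [hτk] at this
      simpa [hk, mul_comm] using this
    have hinv : (k (g * g')) * ((h (g * g'))⁻¹ : Bˣ) = 1 := Units.mul_inv (h (g * g'))
    calc (ω' g g' : B)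
        = (ω' g g' : B) * (k (g * g') * ((h (g * g'))⁻¹ : Bˣ)) := by rw [hinv, mul_one]
      _ = ((ω' g g' : B) * k (g * g')) * ((h (g * g'))⁻¹ : Bˣ) := by ring
      _ = (k g * S g (k g') * (ω g g' : B)) * ((h (g * g'))⁻¹ : Bˣ) := by rw [key]
      _ = (h g : B) * S g (h g') * ((h (g * g'))⁻¹ : Bˣ) * (ω g g' : B) := by
          show k g * S g (k g') * (ω g g' : B) * _ = k g * S g (k g') * _ * (ω g g' : B)
          ring

/-- For a commutative unital algebra `B` with `G`-module structure
`S`, two crossed product algebras `A_ω` and `A_{ω'}` built from 2-cocycles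
`ω, ω' ∈ Z²(G, Bˣ)` are equivalent as `(G,B)`-crossed product algebras if and only
if `ω'·ω⁻¹` is a coboundary; consequently `[ω] ↦ [A_ω]` induces a bijection from
`H²(G, Bˣ)_S` onto the set of equivalence classes of such crossed products. -/
theorem stmt18 : (∀ ω ω' : {ω : G → G → Bˣ // IsCocycle S ω},
      AlgEquivalent S ω.1 ω'.1 ↔ Cohomologous S ω.1 ω'.1) ∧
    ∃ F : Quot (fun ω ω' : {ω : G → G → Bˣ // IsCocycle S ω} =>
          Cohomologous S ω.1 ω'.1) →
        Quot (fun ω ω' : {ω : G → G → Bˣ // IsCocycle S ω} =>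
          AlgEquivalent S ω.1 ω'.1),
      Function.Bijective F ∧ ∀ ω, F (Quot.mk _ ω) = Quot.mk _ ω := by
  have hiff : ∀ ω ω' : {ω : G → G → Bˣ // IsCocycle S ω},
      AlgEquivalent S ω.1 ω'.1 ↔ Cohomologous S ω.1 ω'.1 := fun ω ω' =>
    ⟨equiv_to_cohomologous S ω.2 ω'.2, cohomologous_to_equiv S⟩
  refine ⟨hiff, ?_⟩
  refine ⟨Quot.lift (fun ω => Quot.mk _ ω)
    (fun a b hab => Quot.sound ((hiff a b).mpr hab)), ?_, fun ω => rfl⟩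
  have hG : ∀ x, ∃ y, Quot.lift (fun ω => Quot.mk
      (fun ω ω' : {ω : G → G → Bˣ // IsCocycle S ω} => Cohomologous S ω.1 ω'.1) ω)
      (fun a b hab => Quot.sound ((hiff a b).mp hab)) x = y := fun x => ⟨_, rfl⟩
  constructor
  · intro x y hxy
    induction x using Quot.ind with | _ a =>
    induction y using Quot.ind with | _ b =>
    have := congrArg (Quot.lift (fun ω => Quot.mk
      (fun ω ω' : {ω : G → G → Bˣ // IsCocycle S ω} => Cohomologous S ω.1 ω'.1) ω)
      (fun a b hab => Quot.sound ((hiff a b).mp hab))) hxy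
    simpa using this
  · intro y
    induction y using Quot.ind with | _ a =>
    exact ⟨Quot.mk _ a, rfl⟩
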